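/- Let λ < 0, c_α > 0, 0 < σ < 1, α_k = c_α/(1+k)^σ, and 0 < a < 1. Suppose a sequence e_i ≥ 0 satisfies e_i ≤ M for i ≤ T and e_i ≤ D·((log i + 1)/i^ν)^a for i > T, with constants M, D > 0 and 0 < ν < 1. Then ∑_{i=0}^{t} exp(λ·∑_{k=i+1}^{t} α_k)·α_i·e_i = O( exp((λ c_α/(1−σ))·((1+t)^{1−σ} − (1+T)^{1−σ})) ) + O( ((log t + 1)/t^ν)^a ), i.e., the weighted sum inherits the same polynomial-log decay rate up to an exponentially vanishing transient term. -/

import Mathlib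

open Finset Real

private lemma aux_rpow_step {p x : ℝ} (hp0 : 0 < p) (hp1 : p < 1) (hx : 1 ≤ x) :
    (x + 1) ^ p - x ^ p ≤ p * x ^ (p - 1) := by
  have hx0 : (0 : ℝ) < x := lt_of_lt_of_le one_pos hx
  have hcont : ContinuousOn (fun y : ℝ => y ^ p) (Set.Icc x (x + 1)) := by
    intro y hy
    have hy0 : y ≠ 0 := by
      have : x ≤ y := hy.1
      exact ne_of_gt (by linarith)
    exact (Real.continuousAt_rpow_const y p (Or.inl hy0)).continuousWithinAt
  have hderiv : ∀ y ∈ Set.Ioo x (x + 1),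
      HasDerivAt (fun y : ℝ => y ^ p) (p * y ^ (p - 1)) y := by
    intro y hy
    have hy0 : y ≠ 0 := by
      have : x < y := hy.1
      exact ne_of_gt (by linarith)
    exact Real.hasDerivAt_rpow_const (Or.inl hy0)
  obtain ⟨c, hc, hc'⟩ := exists_hasDerivAt_eq_slope (fun y : ℝ => y ^ p)
    (fun y : ℝ => p * y ^ (p - 1)) (show x < x + 1 by linarith) hcont hderiv
  have h3 : x + 1 - x = 1 := by ring
  rw [h3, div_one] at hc'
  rw [← hc']
  have h2 : c ^ (p - 1) ≤ x ^ (p - 1) :=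
    Real.rpow_le_rpow_of_nonpos hx0 hc.1.le (by linarith)
  exact mul_le_mul_of_nonneg_left h2 hp0.le

private lemma aux_rpow_le_one_add {x a : ℝ} (hx : 0 ≤ x) (ha0 : 0 ≤ a) (ha1 : a ≤ 1) :
    x ^ a ≤ 1 + x := by
  rcases le_total x 1 with h | h
  · have := Real.rpow_le_one hx h ha0
    linarith
  · have h2 := Real.rpow_le_rpow_of_exponent_le h ha1
    rw [Real.rpow_one] at h2
    linarith

private lemma aux_pow_mul_exp_le {β y : ℝ} (hβ : 0 < β) (hy : 0 ≤ y) (n : ℕ) :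
    y ^ n * Real.exp (-(β * y)) ≤ (Nat.factorial n : ℝ) / β ^ n := by
  have hfac : (0 : ℝ) < (Nat.factorial n : ℝ) := by exact_mod_cast Nat.factorial_pos n
  have h1 : (β * y) ^ n / (Nat.factorial n : ℝ) ≤ Real.exp (β * y) := by
    calc (β * y) ^ n / (Nat.factorial n : ℝ)
        ≤ ∑ i ∈ Finset.range (n + 1), (β * y) ^ i / (Nat.factorial i : ℝ) :=
          Finset.single_le_sum (f := fun i => (β * y) ^ i / (Nat.factorial i : ℝ))
            (fun i _ => by positivity) (Finset.self_mem_range_succ n)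
      _ ≤ Real.exp (β * y) := Real.sum_le_exp_of_nonneg (by positivity) _
  rw [div_le_iff₀ hfac, mul_pow] at h1
  have hβn : (0 : ℝ) < β ^ n := by positivity
  rw [Real.exp_neg, le_div_iff₀ hβn]
  calc y ^ n * (Real.exp (β * y))⁻¹ * β ^ n
      = (β ^ n * y ^ n) * (Real.exp (β * y))⁻¹ := by ring
    _ ≤ (Real.exp (β * y) * (Nat.factorial n : ℝ)) * (Real.exp (β * y))⁻¹ := by
        exact mul_le_mul_of_nonneg_right h1 (by positivity)
    _ = (Nat.factorial n : ℝ) := by field_simp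

set_option maxHeartbeats 2000000 in
/-- Rate transfer: if `e_i ≤ M` for `i ≤ T` and `e_i ≤ D·((log i + 1)/i^ν)^a`
for `i > T`, then `∑_{i=0}^{t} exp(λ·∑_{k=i+1}^{t} α_k)·α_i·e_i` with
`α_k = c_α/(1+k)^σ` is bounded by a constant times
`exp((λ c_α/(1−σ))((1+t)^{1−σ} − (1+T)^{1−σ})) + ((log t + 1)/t^ν)^a`. -/
theorem stmt_13 (lam cα σ a ν M D : ℝ) (T : ℕ)
    (hlam : lam < 0) (hcα : 0 < cα) (hσ0 : 0 < σ) (hσ1 : σ < 1)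
    (ha0 : 0 < a) (ha1 : a < 1) (hν0 : 0 < ν) (hν1 : ν < 1)
    (hM : 0 < M) (hD : 0 < D)
    (e : ℕ → ℝ) (he0 : ∀ i, 0 ≤ e i)
    (heM : ∀ i ≤ T, e i ≤ M)
    (heD : ∀ i, T < i → e i ≤ D * ((Real.log i + 1) / (i : ℝ) ^ ν) ^ a) :
    ∃ C > 0, ∀ t, T < t →
      ∑ i ∈ Finset.range (t + 1),
          Real.exp (lam * ∑ k ∈ Finset.Icc (i + 1) t, cα / (1 + (k : ℝ)) ^ σ) *
            (cα / (1 + (i : ℝ)) ^ σ) * e i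
        ≤ C * (Real.exp ((lam * cα / (1 - σ)) *
              ((1 + (t : ℝ)) ^ (1 - σ) - (1 + (T : ℝ)) ^ (1 - σ))) +
            ((Real.log t + 1) / (t : ℝ) ^ ν) ^ a) := by
  set p := 1 - σ with hpdef
  have hp0 : 0 < p := by rw [hpdef]; linarith
  have hp1 : p < 1 := by rw [hpdef]; linarith
  have hlam' : 0 < -lam := by linarith
  obtain ⟨n, hn⟩ := exists_nat_ge (3 / p)
  have hn' : 3 ≤ p * (n : ℝ) := by
    rw [div_le_iff₀ hp0] at hn; linarith
  set c₂ : ℝ := 1 - (5 / 6 : ℝ) ^ p with hc₂def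
  have hc₂ : 0 < c₂ := by
    have := Real.rpow_lt_one (by norm_num : (0:ℝ) ≤ 5/6) (by norm_num) hp0
    rw [hc₂def]; linarith
  set β : ℝ := (-lam) * cα * c₂ / p with hβdef
  have hβ : 0 < β := by
    apply div_pos (mul_pos (mul_pos hlam' hcα) hc₂) hp0
  set K : ℝ := Real.exp (-(lam * cα)) / (-lam) with hKdef
  have hK : 0 < K := div_pos (Real.exp_pos _) hlam'
  set Sα : ℝ := ∑ i ∈ Finset.range (T + 1), cα / (1 + (i : ℝ)) ^ σ with hSαdef
  have hSα : 0 < Sα := by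
    rw [hSαdef]
    exact Finset.sum_pos (fun i _ => by positivity) ⟨0, Finset.mem_range.mpr (Nat.succ_pos T)⟩
  set C₁ : ℝ := M * Sα * Real.exp (-(lam * cα / p)) with hC₁def
  have hC₁ : 0 < C₁ := by
    rw [hC₁def]; positivity
  have hfacpos : (0 : ℝ) < (Nat.factorial n : ℝ) := by exact_mod_cast Nat.factorial_pos n
  set C₂ : ℝ := 2 * cα * D * ((Nat.factorial n : ℝ) / β ^ n) with hC₂def
  have hC₂ : 0 < C₂ := by
    rw [hC₂def]; positivity
  set C₃ : ℝ := D * (2 : ℝ) ^ (ν * a) * K with hC₃def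
  have hC₃ : 0 < C₃ := by
    rw [hC₃def]; positivity
  refine ⟨C₁ + C₂ + C₃, by linarith, ?_⟩
  intro t ht
  have ht0 : 0 < t := lt_of_le_of_lt (Nat.zero_le T) ht
  have htR : (1 : ℝ) ≤ (t : ℝ) := by exact_mod_cast ht0
  have htT : (T : ℝ) < (t : ℝ) := by exact_mod_cast ht
  have hTnn : (0 : ℝ) ≤ (T : ℝ) := Nat.cast_nonneg T
  have hlogt : 0 ≤ Real.log t := Real.log_nonneg htR
  set E : ℝ := Real.exp ((lam * cα / p) *
      ((1 + (t : ℝ)) ^ p - (1 + (T : ℝ)) ^ p)) with hEdef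
  set R : ℝ := ((Real.log t + 1) / (t : ℝ) ^ ν) ^ a with hRdef
  have htν : (0 : ℝ) < (t : ℝ) ^ ν := Real.rpow_pos_of_pos (by linarith) ν
  have hbaseR : 0 < (Real.log t + 1) / (t : ℝ) ^ ν := div_pos (by linarith) htν
  have hE : 0 < E := by rw [hEdef]; exact Real.exp_pos _
  have hR : 0 < R := by rw [hRdef]; exact Real.rpow_pos_of_pos hbaseR a
  -- lower bound on tail sums of stepsizes
  have hAlow : ∀ j, j ≤ t →
      (cα / p) * ((2 + (t : ℝ)) ^ p - (2 + (j : ℝ)) ^ p)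
        ≤ ∑ k ∈ Finset.Icc (j + 1) t, cα / (1 + (k : ℝ)) ^ σ := by
    intro j hj
    set g : ℕ → ℝ := fun m => (1 + (m : ℝ)) ^ p with hg
    have htele : ∑ k ∈ Finset.Icc (j + 1) t, (g (k + 1) - g k) = g (t + 1) - g (j + 1) := by
      rw [← Finset.Ico_add_one_right_eq_Icc, Finset.sum_Ico_eq_sub _ (show j + 1 ≤ t + 1 by omega),
        Finset.sum_range_sub g, Finset.sum_range_sub g]
      ring
    calc (cα / p) * ((2 + (t : ℝ)) ^ p - (2 + (j : ℝ)) ^ p)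
        = (cα / p) * (g (t + 1) - g (j + 1)) := by
          rw [hg]; push_cast; ring_nf
      _ = (cα / p) * ∑ k ∈ Finset.Icc (j + 1) t, (g (k + 1) - g k) := by rw [htele]
      _ = ∑ k ∈ Finset.Icc (j + 1) t, (cα / p) * (g (k + 1) - g k) := by
          rw [Finset.mul_sum]
      _ ≤ ∑ k ∈ Finset.Icc (j + 1) t, cα / (1 + (k : ℝ)) ^ σ := by
          apply Finset.sum_le_sum
          intro k _
          have hknn : (0 : ℝ) ≤ (k : ℝ) := Nat.cast_nonneg k
          have hk1 : (1 : ℝ) ≤ 1 + (k : ℝ) := by linarith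
          have hstep := aux_rpow_step hp0 hp1 hk1
          have hgg : g (k + 1) - g k = (1 + (k : ℝ) + 1) ^ p - (1 + (k : ℝ)) ^ p := by
            rw [hg]; push_cast; ring_nf
          have hns : (1 + (k : ℝ)) ^ (p - 1) = ((1 + (k : ℝ)) ^ σ)⁻¹ := by
            rw [show p - 1 = -σ by rw [hpdef]; ring, Real.rpow_neg (by linarith)]
          calc (cα / p) * (g (k + 1) - g k)
              ≤ (cα / p) * (p * (1 + (k : ℝ)) ^ (p - 1)) := by
                apply mul_le_mul_of_nonneg_left _ (by positivity)
                rw [hgg]; exact hstep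
            _ = cα * ((1 + (k : ℝ)) ^ σ)⁻¹ := by
                rw [hns]; field_simp
            _ = cα / (1 + (k : ℝ)) ^ σ := by rw [div_eq_mul_inv]
  have hExpA : ∀ j, j ≤ t →
      Real.exp (lam * ∑ k ∈ Finset.Icc (j + 1) t, cα / (1 + (k : ℝ)) ^ σ)
        ≤ Real.exp (lam * ((cα / p) * ((2 + (t : ℝ)) ^ p - (2 + (j : ℝ)) ^ p))) := by
    intro j hj
    exact Real.exp_le_exp.mpr (mul_le_mul_of_nonpos_left (hAlow j hj) hlam.le)
  -- telescoping bound on the exponentially weighted sum of stepsizes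
  have hKsum : ∑ i ∈ Finset.range (t + 1),
      Real.exp (lam * ∑ k ∈ Finset.Icc (i + 1) t, cα / (1 + (k : ℝ)) ^ σ) *
        (cα / (1 + (i : ℝ)) ^ σ) ≤ K := by
    set F : ℕ → ℝ := fun i =>
      Real.exp (lam * ∑ k ∈ Finset.Icc i t, cα / (1 + (k : ℝ)) ^ σ) with hF
    have hstep : ∀ i ∈ Finset.range (t + 1),
        Real.exp (lam * ∑ k ∈ Finset.Icc (i + 1) t, cα / (1 + (k : ℝ)) ^ σ) *
          (cα / (1 + (i : ℝ)) ^ σ)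
          ≤ (Real.exp (-(lam * cα)) / (-lam)) * (F (i + 1) - F i) := by
      intro i hi
      have hit : i ≤ t := Nat.lt_succ_iff.mp (Finset.mem_range.mp hi)
      have hinn : (0 : ℝ) ≤ (i : ℝ) := Nat.cast_nonneg i
      have hα : 0 < cα / (1 + (i : ℝ)) ^ σ := by positivity
      have hαle : cα / (1 + (i : ℝ)) ^ σ ≤ cα :=
        div_le_self hcα.le (Real.one_le_rpow (by linarith) hσ0.le)
      set αi := cα / (1 + (i : ℝ)) ^ σ with hαi
      have hFi : F i = F (i + 1) * Real.exp (lam * αi) := by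
        rw [hF]
        simp only
        rw [show Finset.Icc i t = insert i (Finset.Icc (i + 1) t) by
            rw [Finset.Icc_add_one_left_eq_Ioc, Finset.Ioc_insert_left hit],
          Finset.sum_insert (by simp), ← Real.exp_add]
        congr 1
        rw [hαi]
        ring
      have h1 : (-(lam * αi)) + 1 ≤ Real.exp (-(lam * αi)) := Real.add_one_le_exp _
      have h2 : Real.exp (-(lam * αi)) * Real.exp (lam * αi) = 1 := by
        rw [← Real.exp_add]; simp
      have h3 : (-(lam * αi)) * Real.exp (lam * αi) ≤ 1 - Real.exp (lam * αi) := by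
        have h1' := mul_le_mul_of_nonneg_right h1 (Real.exp_pos (lam * αi)).le
        rw [h2] at h1'
        linarith [h1']
      have h4 : Real.exp (lam * cα) ≤ Real.exp (lam * αi) :=
        Real.exp_le_exp.mpr (mul_le_mul_of_nonpos_left hαle hlam.le)
      have hFpos : 0 < F (i + 1) := Real.exp_pos _
      have hdiff : F (i + 1) - F i = F (i + 1) * (1 - Real.exp (lam * αi)) := by
        rw [hFi]; ring
      have h6 : F (i + 1) * ((-lam) * αi * Real.exp (lam * cα)) ≤ F (i + 1) - F i := by
        rw [hdiff]
        apply mul_le_mul_of_nonneg_left _ hFpos.le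
        calc (-lam) * αi * Real.exp (lam * cα)
            ≤ (-lam) * αi * Real.exp (lam * αi) := by
              apply mul_le_mul_of_nonneg_left h4 (mul_nonneg hlam'.le hα.le)
          _ = (-(lam * αi)) * Real.exp (lam * αi) := by ring
          _ ≤ 1 - Real.exp (lam * αi) := h3
      have h8 : Real.exp (-(lam * cα)) * Real.exp (lam * cα) = 1 := by
        rw [← Real.exp_add]; simp
      have h5 : F (i + 1) * αi ≤ (Real.exp (-(lam * cα)) / (-lam)) * (F (i + 1) - F i) := by
        rw [div_mul_eq_mul_div, le_div_iff₀ hlam']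
        have key : F (i + 1) * αi * (-lam)
            = Real.exp (-(lam * cα)) * (F (i + 1) * ((-lam) * αi * Real.exp (lam * cα))) := by
          rw [show Real.exp (-(lam * cα)) * (F (i + 1) * ((-lam) * αi * Real.exp (lam * cα)))
              = (Real.exp (-(lam * cα)) * Real.exp (lam * cα)) * (F (i + 1) * αi * (-lam)) by ring,
            h8, one_mul]
        rw [key]
        exact mul_le_mul_of_nonneg_left h6 (Real.exp_pos _).le
      exact h5
    calc ∑ i ∈ Finset.range (t + 1),
        Real.exp (lam * ∑ k ∈ Finset.Icc (i + 1) t, cα / (1 + (k : ℝ)) ^ σ) *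
          (cα / (1 + (i : ℝ)) ^ σ)
        ≤ ∑ i ∈ Finset.range (t + 1),
            (Real.exp (-(lam * cα)) / (-lam)) * (F (i + 1) - F i) :=
          Finset.sum_le_sum hstep
      _ = (Real.exp (-(lam * cα)) / (-lam)) * (F (t + 1) - F 0) := by
          rw [← Finset.mul_sum, Finset.sum_range_sub F]
      _ ≤ (Real.exp (-(lam * cα)) / (-lam)) * 1 := by
          apply mul_le_mul_of_nonneg_left _ (div_pos (Real.exp_pos _) hlam').le
          have hF1 : F (t + 1) = 1 := by
            rw [hF]
            simp only
            rw [Finset.Icc_eq_empty (by omega)]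
            simp
          have hF0 : 0 < F 0 := Real.exp_pos _
          linarith
      _ = K := by rw [mul_one, hKdef]
  -- Part 1 : initial segment
  have hpart1 : ∑ i ∈ Finset.range (T + 1),
      Real.exp (lam * ∑ k ∈ Finset.Icc (i + 1) t, cα / (1 + (k : ℝ)) ^ σ) *
        (cα / (1 + (i : ℝ)) ^ σ) * e i ≤ C₁ * E := by
    have hTt : T ≤ t := ht.le
    calc ∑ i ∈ Finset.range (T + 1),
        Real.exp (lam * ∑ k ∈ Finset.Icc (i + 1) t, cα / (1 + (k : ℝ)) ^ σ) *
          (cα / (1 + (i : ℝ)) ^ σ) * e i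
        ≤ ∑ i ∈ Finset.range (T + 1),
            Real.exp (lam * ∑ k ∈ Finset.Icc (T + 1) t, cα / (1 + (k : ℝ)) ^ σ) *
              (cα / (1 + (i : ℝ)) ^ σ) * M := by
          apply Finset.sum_le_sum
          intro i hi
          have hiT : i ≤ T := Nat.lt_succ_iff.mp (Finset.mem_range.mp hi)
          have hmono : ∑ k ∈ Finset.Icc (T + 1) t, cα / (1 + (k : ℝ)) ^ σ
              ≤ ∑ k ∈ Finset.Icc (i + 1) t, cα / (1 + (k : ℝ)) ^ σ :=
            Finset.sum_le_sum_of_subset_of_nonneg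
              (Finset.Icc_subset_Icc_left (by omega)) (fun k _ _ => by positivity)
          have hexp : Real.exp (lam * ∑ k ∈ Finset.Icc (i + 1) t, cα / (1 + (k : ℝ)) ^ σ)
              ≤ Real.exp (lam * ∑ k ∈ Finset.Icc (T + 1) t, cα / (1 + (k : ℝ)) ^ σ) :=
            Real.exp_le_exp.mpr (mul_le_mul_of_nonpos_left hmono hlam.le)
          exact mul_le_mul (mul_le_mul_of_nonneg_right hexp (by positivity))
            (heM i hiT) (he0 i) (by positivity)
      _ = (M * Sα) *
          Real.exp (lam * ∑ k ∈ Finset.Icc (T + 1) t, cα / (1 + (k : ℝ)) ^ σ) := by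
          rw [← Finset.sum_mul, ← Finset.mul_sum, ← hSαdef]
          ring
      _ ≤ (M * Sα) * (Real.exp (-(lam * cα / p)) * E) := by
          apply mul_le_mul_of_nonneg_left _ (by positivity)
          rw [hEdef, ← Real.exp_add]
          apply Real.exp_le_exp.mpr
          have h1 := hAlow T hTt
          have h2 : (1 + (t : ℝ)) ^ p ≤ (2 + (t : ℝ)) ^ p :=
            Real.rpow_le_rpow (by linarith) (by linarith) hp0.le
          have h3 : (2 + (T : ℝ)) ^ p ≤ (1 + (T : ℝ)) ^ p + 1 := by
            have hT1 : (1 : ℝ) ≤ 1 + (T : ℝ) := by linarith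
            have hmvt := aux_rpow_step hp0 hp1 hT1
            have h4 : (1 + (T : ℝ)) ^ (p - 1) ≤ 1 :=
              Real.rpow_le_one_of_one_le_of_nonpos hT1 (by linarith)
            have h5 : (1 + (T : ℝ) + 1) ^ p - (1 + (T : ℝ)) ^ p ≤ p := by
              have h4' := mul_le_mul_of_nonneg_left h4 hp0.le
              rw [mul_one] at h4'
              linarith [hmvt, h4']
            calc (2 + (T : ℝ)) ^ p = (1 + (T : ℝ) + 1) ^ p := by ring_nf
              _ ≤ (1 + (T : ℝ)) ^ p + p := by linarith
              _ ≤ (1 + (T : ℝ)) ^ p + 1 := by linarith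
          have h6 : (cα / p) * ((1 + (t : ℝ)) ^ p - (1 + (T : ℝ)) ^ p - 1)
              ≤ (cα / p) * ((2 + (t : ℝ)) ^ p - (2 + (T : ℝ)) ^ p) := by
            apply mul_le_mul_of_nonneg_left _ (by positivity)
            linarith
          calc lam * ∑ k ∈ Finset.Icc (T + 1) t, cα / (1 + (k : ℝ)) ^ σ
              ≤ lam * ((cα / p) * ((2 + (t : ℝ)) ^ p - (2 + (T : ℝ)) ^ p)) :=
                mul_le_mul_of_nonpos_left h1 hlam.le
            _ ≤ lam * ((cα / p) * ((1 + (t : ℝ)) ^ p - (1 + (T : ℝ)) ^ p - 1)) :=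
                mul_le_mul_of_nonpos_left h6 hlam.le
            _ = -(lam * cα / p) + lam * cα / p * ((1 + (t : ℝ)) ^ p - (1 + (T : ℝ)) ^ p) := by
                field_simp
                ring
      _ = C₁ * E := by rw [hC₁def]; ring
  -- Part 2 : middle segment
  have hpart2 : ∑ i ∈ (Finset.Ico (T + 1) (t + 1)).filter (fun i => 2 * i ≤ t),
      Real.exp (lam * ∑ k ∈ Finset.Icc (i + 1) t, cα / (1 + (k : ℝ)) ^ σ) *
        (cα / (1 + (i : ℝ)) ^ σ) * e i ≤ C₂ * R := by
    set B2 : ℝ := Real.exp (-(β * (1 + (t : ℝ)) ^ p)) * cα * (D * (2 + Real.log t))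
      with hB2def
    have hB2nn : 0 ≤ B2 := by rw [hB2def]; positivity
    have hbound : ∀ i ∈ (Finset.Ico (T + 1) (t + 1)).filter (fun i => 2 * i ≤ t),
        Real.exp (lam * ∑ k ∈ Finset.Icc (i + 1) t, cα / (1 + (k : ℝ)) ^ σ) *
          (cα / (1 + (i : ℝ)) ^ σ) * e i ≤ B2 := by
      intro i hi
      obtain ⟨hmem, h2i⟩ := Finset.mem_filter.mp hi
      obtain ⟨hiT, hitlt⟩ := Finset.mem_Ico.mp hmem
      have hit' : i ≤ t := by omega
      have hi1 : 1 ≤ i := by omega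
      have hiR : (1 : ℝ) ≤ (i : ℝ) := by exact_mod_cast hi1
      have h2iR : 2 * (i : ℝ) ≤ (t : ℝ) := by exact_mod_cast h2i
      have hitR : (i : ℝ) ≤ (t : ℝ) := by exact_mod_cast hit'
      have hexp1 := hExpA i hit'
      have hfrac : (2 + (i : ℝ)) ≤ (5 / 6) * (2 + (t : ℝ)) := by linarith
      have h56 : (2 + (i : ℝ)) ^ p ≤ (5 / 6 : ℝ) ^ p * (2 + (t : ℝ)) ^ p := by
        calc (2 + (i : ℝ)) ^ p ≤ ((5 / 6) * (2 + (t : ℝ))) ^ p :=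
            Real.rpow_le_rpow (by linarith) hfrac hp0.le
          _ = (5 / 6 : ℝ) ^ p * (2 + (t : ℝ)) ^ p :=
            Real.mul_rpow (by norm_num) (by linarith)
      have hgap : c₂ * (1 + (t : ℝ)) ^ p ≤ (2 + (t : ℝ)) ^ p - (2 + (i : ℝ)) ^ p := by
        have h2t : (1 + (t : ℝ)) ^ p ≤ (2 + (t : ℝ)) ^ p :=
          Real.rpow_le_rpow (by linarith) (by linarith) hp0.le
        calc c₂ * (1 + (t : ℝ)) ^ p ≤ c₂ * (2 + (t : ℝ)) ^ p :=
            mul_le_mul_of_nonneg_left h2t hc₂.le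
          _ = (2 + (t : ℝ)) ^ p - (5 / 6 : ℝ) ^ p * (2 + (t : ℝ)) ^ p := by
              rw [hc₂def]; ring
          _ ≤ (2 + (t : ℝ)) ^ p - (2 + (i : ℝ)) ^ p := by linarith
      have hexp2 : lam * ((cα / p) * ((2 + (t : ℝ)) ^ p - (2 + (i : ℝ)) ^ p))
          ≤ -(β * (1 + (t : ℝ)) ^ p) := by
        calc lam * ((cα / p) * ((2 + (t : ℝ)) ^ p - (2 + (i : ℝ)) ^ p))
            ≤ lam * ((cα / p) * (c₂ * (1 + (t : ℝ)) ^ p)) :=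
              mul_le_mul_of_nonpos_left
                (mul_le_mul_of_nonneg_left hgap (by positivity)) hlam.le
          _ = -(β * (1 + (t : ℝ)) ^ p) := by rw [hβdef]; field_simp
      have hexp3 : Real.exp (lam * ∑ k ∈ Finset.Icc (i + 1) t, cα / (1 + (k : ℝ)) ^ σ)
          ≤ Real.exp (-(β * (1 + (t : ℝ)) ^ p)) :=
        le_trans hexp1 (Real.exp_le_exp.mpr hexp2)
      have hαle : cα / (1 + (i : ℝ)) ^ σ ≤ cα :=
        div_le_self hcα.le (Real.one_le_rpow (by linarith) hσ0.le)
      have hν1' : (1 : ℝ) ≤ (i : ℝ) ^ ν := Real.one_le_rpow hiR hν0.le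
      have hlogi : 0 ≤ Real.log i := Real.log_nonneg hiR
      have hebound : e i ≤ D * (2 + Real.log t) := by
        have h9 := heD i (by omega)
        have h10 : (Real.log i + 1) / (i : ℝ) ^ ν ≤ Real.log i + 1 :=
          div_le_self (by linarith) hν1'
        have h11 : ((Real.log i + 1) / (i : ℝ) ^ ν) ^ a
            ≤ 1 + (Real.log i + 1) / (i : ℝ) ^ ν :=
          aux_rpow_le_one_add (by positivity) ha0.le ha1.le
        have h12 : Real.log i ≤ Real.log t := Real.log_le_log (by linarith) hitR
        calc e i ≤ D * ((Real.log i + 1) / (i : ℝ) ^ ν) ^ a := h9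
          _ ≤ D * (2 + Real.log t) := by
              apply mul_le_mul_of_nonneg_left _ hD.le
              linarith
      rw [hB2def]
      exact mul_le_mul (mul_le_mul hexp3 hαle (by positivity) (Real.exp_pos _).le)
        hebound (he0 i) (by positivity)
    have hcard : (((Finset.Ico (T + 1) (t + 1)).filter (fun i => 2 * i ≤ t)).card : ℝ)
        ≤ (t : ℝ) + 1 := by
      have h := le_trans (Finset.card_filter_le (Finset.Ico (T + 1) (t + 1))
        (fun i => 2 * i ≤ t)) (by rw [Nat.card_Ico]; omega : (Finset.Ico (T + 1) (t + 1)).card ≤ t + 1)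
      exact_mod_cast h
    have hsum2 : ∑ i ∈ (Finset.Ico (T + 1) (t + 1)).filter (fun i => 2 * i ≤ t),
        Real.exp (lam * ∑ k ∈ Finset.Icc (i + 1) t, cα / (1 + (k : ℝ)) ^ σ) *
          (cα / (1 + (i : ℝ)) ^ σ) * e i ≤ ((t : ℝ) + 1) * B2 := by
      calc ∑ i ∈ (Finset.Ico (T + 1) (t + 1)).filter (fun i => 2 * i ≤ t),
          Real.exp (lam * ∑ k ∈ Finset.Icc (i + 1) t, cα / (1 + (k : ℝ)) ^ σ) *
            (cα / (1 + (i : ℝ)) ^ σ) * e i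
          ≤ ((Finset.Ico (T + 1) (t + 1)).filter (fun i => 2 * i ≤ t)).card • B2 :=
            Finset.sum_le_card_nsmul _ _ _ hbound
        _ = (((Finset.Ico (T + 1) (t + 1)).filter (fun i => 2 * i ≤ t)).card : ℝ) * B2 :=
            nsmul_eq_mul _ _
        _ ≤ ((t : ℝ) + 1) * B2 := mul_le_mul_of_nonneg_right hcard hB2nn
    have hRlow : 1 / (1 + (t : ℝ)) ≤ R := by
      have htnn : (0 : ℝ) ≤ (t : ℝ) := by linarith
      have hb1 : (1 : ℝ) / (t : ℝ) ^ ν ≤ (Real.log t + 1) / (t : ℝ) ^ ν :=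
        div_le_div₀ (by linarith) (by linarith) htν le_rfl
      have hb0 : ((1 : ℝ) / (t : ℝ) ^ ν) ^ a ≤ R := by
        rw [hRdef]
        exact Real.rpow_le_rpow (by positivity) hb1 ha0.le
      have he1 : ((1 : ℝ) / (t : ℝ) ^ ν) ^ a = ((t : ℝ) ^ (ν * a))⁻¹ := by
        rw [one_div, ← Real.rpow_neg htnn, ← Real.rpow_mul htnn,
          show -ν * a = -(ν * a) by ring, Real.rpow_neg htnn]
      have he3 : (t : ℝ) ^ (ν * a) ≤ 1 + (t : ℝ) := by
        calc (t : ℝ) ^ (ν * a) ≤ (t : ℝ) ^ (1 : ℝ) :=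
            Real.rpow_le_rpow_of_exponent_le htR (by
              have := mul_le_mul hν1.le ha1.le ha0.le zero_le_one
              linarith)
          _ = (t : ℝ) := Real.rpow_one _
          _ ≤ 1 + (t : ℝ) := by linarith
      have he4 : (1 + (t : ℝ))⁻¹ ≤ ((t : ℝ) ^ (ν * a))⁻¹ :=
        inv_anti₀ (Real.rpow_pos_of_pos (by linarith) _) he3
      calc 1 / (1 + (t : ℝ)) = (1 + (t : ℝ))⁻¹ := one_div _
        _ ≤ ((t : ℝ) ^ (ν * a))⁻¹ := he4
        _ = ((1 : ℝ) / (t : ℝ) ^ ν) ^ a := he1.symm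
        _ ≤ R := hb0
    have hpoly : (1 + (t : ℝ)) ^ (3 : ℕ) * Real.exp (-(β * (1 + (t : ℝ)) ^ p))
        ≤ (Nat.factorial n : ℝ) / β ^ n := by
      have hx1 : (1 : ℝ) ≤ 1 + (t : ℝ) := by linarith
      have e4 : (1 + (t : ℝ)) ^ (3 : ℕ) ≤ ((1 + (t : ℝ)) ^ p) ^ n := by
        calc (1 + (t : ℝ)) ^ (3 : ℕ) = (1 + (t : ℝ)) ^ ((3 : ℕ) : ℝ) :=
            (Real.rpow_natCast _ 3).symm
          _ ≤ (1 + (t : ℝ)) ^ (p * (n : ℝ)) :=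
            Real.rpow_le_rpow_of_exponent_le hx1 (by push_cast; linarith)
          _ = ((1 + (t : ℝ)) ^ p) ^ ((n : ℕ) : ℝ) := Real.rpow_mul (by linarith) _ _
          _ = ((1 + (t : ℝ)) ^ p) ^ n := Real.rpow_natCast _ n
      calc (1 + (t : ℝ)) ^ (3 : ℕ) * Real.exp (-(β * (1 + (t : ℝ)) ^ p))
          ≤ ((1 + (t : ℝ)) ^ p) ^ n * Real.exp (-(β * (1 + (t : ℝ)) ^ p)) :=
            mul_le_mul_of_nonneg_right e4 (Real.exp_pos _).le
        _ ≤ (Nat.factorial n : ℝ) / β ^ n := aux_pow_mul_exp_le hβ (by positivity) n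
    have hfin2 : ((t : ℝ) + 1) * B2 ≤ C₂ * R := by
      have hlt : Real.log t ≤ (t : ℝ) := Real.log_le_self (by linarith)
      have h2log : 2 + Real.log t ≤ 2 * (1 + (t : ℝ)) := by linarith
      calc ((t : ℝ) + 1) * B2
          ≤ ((t : ℝ) + 1) * (Real.exp (-(β * (1 + (t : ℝ)) ^ p)) * cα *
              (D * (2 * (1 + (t : ℝ))))) := by
            apply mul_le_mul_of_nonneg_left _ (by linarith)
            rw [hB2def]
            apply mul_le_mul_of_nonneg_left _ (by positivity)
            exact mul_le_mul_of_nonneg_left h2log hD.le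
        _ = (2 * cα * D) * ((1 + (t : ℝ)) ^ (2 : ℕ) *
              Real.exp (-(β * (1 + (t : ℝ)) ^ p))) := by ring
        _ ≤ (2 * cα * D) * (((Nat.factorial n : ℝ) / β ^ n) * (1 / (1 + (t : ℝ)))) := by
            apply mul_le_mul_of_nonneg_left _ (by positivity)
            rw [mul_one_div, le_div_iff₀ (by linarith : (0 : ℝ) < 1 + (t : ℝ))]
            calc (1 + (t : ℝ)) ^ (2 : ℕ) * Real.exp (-(β * (1 + (t : ℝ)) ^ p)) *
                  (1 + (t : ℝ))
                = (1 + (t : ℝ)) ^ (3 : ℕ) * Real.exp (-(β * (1 + (t : ℝ)) ^ p)) := by ring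
              _ ≤ (Nat.factorial n : ℝ) / β ^ n := hpoly
        _ = C₂ * (1 / (1 + (t : ℝ))) := by rw [hC₂def]; ring
        _ ≤ C₂ * R := mul_le_mul_of_nonneg_left hRlow hC₂.le
    exact le_trans hsum2 hfin2
  -- Part 3 : final segment
  have hpart3 : ∑ i ∈ (Finset.Ico (T + 1) (t + 1)).filter (fun i => ¬ 2 * i ≤ t),
      Real.exp (lam * ∑ k ∈ Finset.Icc (i + 1) t, cα / (1 + (k : ℝ)) ^ σ) *
        (cα / (1 + (i : ℝ)) ^ σ) * e i ≤ C₃ * R := by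
    have hb : ∀ i ∈ (Finset.Ico (T + 1) (t + 1)).filter (fun i => ¬ 2 * i ≤ t),
        Real.exp (lam * ∑ k ∈ Finset.Icc (i + 1) t, cα / (1 + (k : ℝ)) ^ σ) *
          (cα / (1 + (i : ℝ)) ^ σ) * e i
          ≤ Real.exp (lam * ∑ k ∈ Finset.Icc (i + 1) t, cα / (1 + (k : ℝ)) ^ σ) *
              (cα / (1 + (i : ℝ)) ^ σ) * (D * ((2 : ℝ) ^ (ν * a) * R)) := by
      intro i hi
      obtain ⟨hmem, h2i⟩ := Finset.mem_filter.mp hi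
      obtain ⟨hiT, hitlt⟩ := Finset.mem_Ico.mp hmem
      have hit' : i ≤ t := by omega
      have hi1 : 1 ≤ i := by omega
      have hiR : (1 : ℝ) ≤ (i : ℝ) := by exact_mod_cast hi1
      have hitR : (i : ℝ) ≤ (t : ℝ) := by exact_mod_cast hit'
      have hti2 : (t : ℝ) ≤ 2 * (i : ℝ) := by exact_mod_cast (by omega : t ≤ 2 * i)
      have hlogi : 0 ≤ Real.log i := Real.log_nonneg hiR
      have hiν : (0 : ℝ) < (i : ℝ) ^ ν := Real.rpow_pos_of_pos (by linarith) ν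
      have he' : e i ≤ D * ((2 : ℝ) ^ (ν * a) * R) := by
        have h9 := heD i (by omega)
        have hhalf : (t : ℝ) / 2 ≤ (i : ℝ) := by linarith
        have hd1 : ((t : ℝ) / 2) ^ ν ≤ (i : ℝ) ^ ν :=
          Real.rpow_le_rpow (by linarith) hhalf hν0.le
        have hd2 : ((t : ℝ) / 2) ^ ν = (t : ℝ) ^ ν / (2 : ℝ) ^ ν :=
          Real.div_rpow (by linarith) (by norm_num) ν
        have hd3 : (0 : ℝ) < (t : ℝ) ^ ν / (2 : ℝ) ^ ν := by positivity
        have hnum : Real.log i + 1 ≤ Real.log t + 1 := by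
          have := Real.log_le_log (by linarith : (0 : ℝ) < (i : ℝ)) hitR
          linarith
        have hbb : (Real.log i + 1) / (i : ℝ) ^ ν
            ≤ (Real.log t + 1) / ((t : ℝ) ^ ν / (2 : ℝ) ^ ν) :=
          div_le_div₀ (by linarith) hnum hd3 (by rw [← hd2]; exact hd1)
        have h2ν0 : ((2 : ℝ) ^ ν) ≠ 0 := by positivity
        have htν0 : ((t : ℝ) ^ ν) ≠ 0 := ne_of_gt htν
        have hbb2 : (Real.log t + 1) / ((t : ℝ) ^ ν / (2 : ℝ) ^ ν)
            = (2 : ℝ) ^ ν * ((Real.log t + 1) / (t : ℝ) ^ ν) := by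
          field_simp
        have hchain : (Real.log i + 1) / (i : ℝ) ^ ν
            ≤ (2 : ℝ) ^ ν * ((Real.log t + 1) / (t : ℝ) ^ ν) := by
          rw [← hbb2]; exact hbb
        have hrp : ((Real.log i + 1) / (i : ℝ) ^ ν) ^ a
            ≤ (2 : ℝ) ^ (ν * a) * R := by
          calc ((Real.log i + 1) / (i : ℝ) ^ ν) ^ a
              ≤ ((2 : ℝ) ^ ν * ((Real.log t + 1) / (t : ℝ) ^ ν)) ^ a :=
                Real.rpow_le_rpow (by positivity) hchain ha0.le
            _ = ((2 : ℝ) ^ ν) ^ a * ((Real.log t + 1) / (t : ℝ) ^ ν) ^ a :=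
                Real.mul_rpow (by positivity) hbaseR.le
            _ = (2 : ℝ) ^ (ν * a) * R := by
                rw [hRdef, ← Real.rpow_mul (by norm_num : (0:ℝ) ≤ 2)]
        calc e i ≤ D * ((Real.log i + 1) / (i : ℝ) ^ ν) ^ a := h9
          _ ≤ D * ((2 : ℝ) ^ (ν * a) * R) := mul_le_mul_of_nonneg_left hrp hD.le
      exact mul_le_mul_of_nonneg_left he' (by positivity)
    have hsubset : (Finset.Ico (T + 1) (t + 1)).filter (fun i => ¬ 2 * i ≤ t)
        ⊆ Finset.range (t + 1) := by
      intro x hx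
      obtain ⟨hmem, _⟩ := Finset.mem_filter.mp hx
      exact Finset.mem_range.mpr (Finset.mem_Ico.mp hmem).2
    have hKsub : ∑ i ∈ (Finset.Ico (T + 1) (t + 1)).filter (fun i => ¬ 2 * i ≤ t),
        Real.exp (lam * ∑ k ∈ Finset.Icc (i + 1) t, cα / (1 + (k : ℝ)) ^ σ) *
          (cα / (1 + (i : ℝ)) ^ σ) ≤ K :=
      le_trans (Finset.sum_le_sum_of_subset_of_nonneg hsubset
        (fun k _ _ => by positivity)) hKsum
    calc ∑ i ∈ (Finset.Ico (T + 1) (t + 1)).filter (fun i => ¬ 2 * i ≤ t),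
        Real.exp (lam * ∑ k ∈ Finset.Icc (i + 1) t, cα / (1 + (k : ℝ)) ^ σ) *
          (cα / (1 + (i : ℝ)) ^ σ) * e i
        ≤ ∑ i ∈ (Finset.Ico (T + 1) (t + 1)).filter (fun i => ¬ 2 * i ≤ t),
            Real.exp (lam * ∑ k ∈ Finset.Icc (i + 1) t, cα / (1 + (k : ℝ)) ^ σ) *
              (cα / (1 + (i : ℝ)) ^ σ) * (D * ((2 : ℝ) ^ (ν * a) * R)) :=
          Finset.sum_le_sum hb
      _ = (∑ i ∈ (Finset.Ico (T + 1) (t + 1)).filter (fun i => ¬ 2 * i ≤ t),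
            Real.exp (lam * ∑ k ∈ Finset.Icc (i + 1) t, cα / (1 + (k : ℝ)) ^ σ) *
              (cα / (1 + (i : ℝ)) ^ σ)) * (D * ((2 : ℝ) ^ (ν * a) * R)) :=
          (Finset.sum_mul _ _ _).symm
      _ ≤ K * (D * ((2 : ℝ) ^ (ν * a) * R)) :=
          mul_le_mul_of_nonneg_right hKsub (by positivity)
      _ = C₃ * R := by rw [hC₃def]; ring
  -- combine
  calc ∑ i ∈ Finset.range (t + 1),
      Real.exp (lam * ∑ k ∈ Finset.Icc (i + 1) t, cα / (1 + (k : ℝ)) ^ σ) *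
        (cα / (1 + (i : ℝ)) ^ σ) * e i
      = ∑ i ∈ Finset.range (T + 1),
          Real.exp (lam * ∑ k ∈ Finset.Icc (i + 1) t, cα / (1 + (k : ℝ)) ^ σ) *
            (cα / (1 + (i : ℝ)) ^ σ) * e i
        + ∑ i ∈ Finset.Ico (T + 1) (t + 1),
            Real.exp (lam * ∑ k ∈ Finset.Icc (i + 1) t, cα / (1 + (k : ℝ)) ^ σ) *
              (cα / (1 + (i : ℝ)) ^ σ) * e i := by
        simp only [Finset.range_eq_Ico]
        exact (Finset.sum_Ico_consecutive _ (Nat.zero_le (T + 1)) (by omega : T + 1 ≤ t + 1)).symm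
    _ = ∑ i ∈ Finset.range (T + 1),
          Real.exp (lam * ∑ k ∈ Finset.Icc (i + 1) t, cα / (1 + (k : ℝ)) ^ σ) *
            (cα / (1 + (i : ℝ)) ^ σ) * e i
        + (∑ i ∈ (Finset.Ico (T + 1) (t + 1)).filter (fun i => 2 * i ≤ t),
            Real.exp (lam * ∑ k ∈ Finset.Icc (i + 1) t, cα / (1 + (k : ℝ)) ^ σ) *
              (cα / (1 + (i : ℝ)) ^ σ) * e i
          + ∑ i ∈ (Finset.Ico (T + 1) (t + 1)).filter (fun i => ¬ 2 * i ≤ t),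
              Real.exp (lam * ∑ k ∈ Finset.Icc (i + 1) t, cα / (1 + (k : ℝ)) ^ σ) *
                (cα / (1 + (i : ℝ)) ^ σ) * e i) := by
        rw [Finset.sum_filter_add_sum_filter_not]
    _ ≤ C₁ * E + (C₂ * R + C₃ * R) :=
        add_le_add hpart1 (add_le_add hpart2 hpart3)
    _ ≤ (C₁ + C₂ + C₃) * (E + R) := by
        have e1 := mul_pos hC₂ hE
        have e2 := mul_pos hC₃ hE
        have e3 := mul_pos hC₁ hR
        linarith only [e1, e2, e3]
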